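/- Let n, P, Y be integers with 0 < P < n and Y = n − P, and let μ be a real number with log n ≤ μ ≤ P. Then the probability, over a uniformly random permutation of the n items, that there exists a set of ⌊nμ/P⌋ consecutive positions such that more than 4μ of the items occupying these positions are pink, is at most n/4^μ. -/

import Mathlib

open Finset

private lemma desc_ratio (P n : ℕ) (h : P ≤ n) :
    ∀ k, P.descFactorial k * n ^ k ≤ n.descFactorial k * P ^ k
  | 0 => by simp
  | (k+1) => by
    rw [Nat.descFactorial_succ, Nat.descFactorial_succ, pow_succ, pow_succ]
    have h1 := desc_ratio P n h k
    have h2 : (P - k) * n ≤ (n - k) * P := by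
      calc (P - k) * n = P * n - k * n := Nat.sub_mul _ _ _
        _ ≤ P * n - k * P := Nat.sub_le_sub_left (Nat.mul_le_mul_left k h) _
        _ = (n - k) * P := by rw [mul_comm P n, ← Nat.sub_mul]
    calc (P - k) * P.descFactorial k * (n ^ k * n)
        = ((P - k) * n) * (P.descFactorial k * n ^ k) := by ring
      _ ≤ ((n - k) * P) * (n.descFactorial k * P ^ k) := Nat.mul_le_mul h2 h1
      _ = (n - k) * n.descFactorial k * (P ^ k * P) := by ring

private lemma fixed_set_count (n : ℕ) (Pink T : Finset (Fin n)) :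
    ((Finset.univ.filter fun σ : Equiv.Perm (Fin n) => ∀ i ∈ T, σ i ∈ Pink)).card
      ≤ Pink.card.descFactorial T.card * (n - T.card).factorial := by
  classical
  set A := Finset.univ.filter fun σ : Equiv.Perm (Fin n) => ∀ i ∈ T, σ i ∈ Pink with hA
  rcases A.eq_empty_or_nonempty with hAe | ⟨σ₀, hσ₀⟩
  · simp [hAe]
  have hσ₀' : ∀ i ∈ T, σ₀ i ∈ Pink := by
    simpa [hA] using hσ₀
  let mk : (σ : Equiv.Perm (Fin n)) → (∀ i ∈ T, σ i ∈ Pink) →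
      ({x // x ∈ T} ↪ {x // x ∈ Pink}) := fun σ h =>
    ⟨fun i => ⟨σ i.1, h i.1 i.2⟩, fun a b hab =>
      Subtype.ext (σ.injective (congrArg Subtype.val hab))⟩
  let G : Equiv.Perm (Fin n) → ({x // x ∈ T} ↪ {x // x ∈ Pink}) := fun σ =>
    if h : ∀ i ∈ T, σ i ∈ Pink then mk σ h else mk σ₀ hσ₀'
  have key := Finset.card_eq_sum_card_fiberwise
    (f := G) (s := A) (t := Finset.univ) (fun σ _ => Finset.mem_univ _)
  rw [key]
  have fibbound : ∀ f : ({x // x ∈ T} ↪ {x // x ∈ Pink}),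
      (A.filter fun σ => G σ = f).card ≤ (n - T.card).factorial := by
    intro f
    set B := A.filter fun σ => G σ = f with hB
    rcases B.eq_empty_or_nonempty with hBe | ⟨σ₁, hσ₁⟩
    · simp [hBe]
    -- property of members of B
    have hQ : ∀ σ ∈ B, ∀ (i : Fin n) (hi : i ∈ T), σ i = ↑(f ⟨i, hi⟩) := by
      intro σ hσ i hi
      rw [hB, Finset.mem_filter] at hσ
      obtain ⟨hσA, hσG⟩ := hσ
      rw [hA, Finset.mem_filter] at hσA
      have hmem : ∀ j ∈ T, σ j ∈ Pink := hσA.2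
      have : G σ = mk σ hmem := by simp [G, dif_pos hmem]
      rw [this] at hσG
      have := congrArg (fun e => ((e ⟨i, hi⟩ : {x // x ∈ Pink}) : Fin n)) hσG
      exact this
    -- image of f as a finset
    set Im : Finset (Fin n) := T.attach.image (fun i => ((f i : {x // x ∈ Pink}) : Fin n)) with hIm
    have hImcard : Im.card = T.card := by
      rw [hIm, Finset.card_image_of_injective _
        (fun a b hab => f.injective (Subtype.ext hab)), Finset.card_attach]
    have hQ1 := hQ σ₁ hσ₁
    -- the property used for the second restriction
    have key2 : ∀ (σ : Equiv.Perm (Fin n)), (∀ (i : Fin n) (hi : i ∈ T), σ i = ↑(f ⟨i, hi⟩)) →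
        ∀ j : {x // x ∈ Tᶜ}, σ j.1 ∈ Imᶜ := by
      intro σ hσ j
      rw [Finset.mem_compl]
      intro hmem
      rw [hIm, Finset.mem_image] at hmem
      obtain ⟨i, _, hi2⟩ := hmem
      have : σ i.1 = σ j.1 := by rw [hσ i.1 i.2, hi2]
      have := σ.injective this
      have hj := j.2
      rw [Finset.mem_compl] at hj
      exact hj (this ▸ i.2)
    let mk2 : (σ : Equiv.Perm (Fin n)) → (∀ (i : Fin n) (hi : i ∈ T), σ i = ↑(f ⟨i, hi⟩)) →
        ({x // x ∈ Tᶜ} ↪ {x // x ∈ Imᶜ}) := fun σ h =>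
      ⟨fun j => ⟨σ j.1, key2 σ h j⟩, fun a b hab =>
        Subtype.ext (σ.injective (congrArg Subtype.val hab))⟩
    let Ψ : Equiv.Perm (Fin n) → ({x // x ∈ Tᶜ} ↪ {x // x ∈ Imᶜ}) := fun σ =>
      if h : ∀ (i : Fin n) (hi : i ∈ T), σ i = ↑(f ⟨i, hi⟩) then mk2 σ h else mk2 σ₁ hQ1
    have hcard : B.card ≤ (Finset.univ : Finset ({x // x ∈ Tᶜ} ↪ {x // x ∈ Imᶜ})).card := by
      apply Finset.card_le_card_of_injOn Ψ (fun _ _ => Finset.mem_univ _)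
      intro σ hσ τ hτ hst
      have hQσ := hQ σ hσ
      have hQτ := hQ τ hτ
      have hΨσ : Ψ σ = mk2 σ hQσ := by simp [Ψ, dif_pos hQσ]
      have hΨτ : Ψ τ = mk2 τ hQτ := by simp [Ψ, dif_pos hQτ]
      rw [hΨσ, hΨτ] at hst
      apply Equiv.ext
      intro x
      by_cases hx : x ∈ T
      · rw [hQσ x hx, hQτ x hx]
      · have hx' : x ∈ Tᶜ := Finset.mem_compl.mpr hx
        have := congrArg (fun e => ((e ⟨x, hx'⟩ : {y // y ∈ Imᶜ}) : Fin n)) hst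
        exact this
    refine hcard.trans ?_
    rw [Finset.card_univ, Fintype.card_embedding_eq, Fintype.card_coe, Fintype.card_coe,
      Finset.card_compl, Finset.card_compl, hImcard, Fintype.card_fin]
    rw [Nat.descFactorial_self]
  calc ∑ f ∈ (Finset.univ : Finset ({x // x ∈ T} ↪ {x // x ∈ Pink})),
        (A.filter fun σ => G σ = f).card
      ≤ ∑ _f ∈ (Finset.univ : Finset ({x // x ∈ T} ↪ {x // x ∈ Pink})),
        (n - T.card).factorial := Finset.sum_le_sum (fun f _ => fibbound f)
    _ = (Finset.univ : Finset ({x // x ∈ T} ↪ {x // x ∈ Pink})).card *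
        (n - T.card).factorial := by rw [Finset.sum_const, smul_eq_mul]
    _ = Pink.card.descFactorial T.card * (n - T.card).factorial := by
        rw [Finset.card_univ, Fintype.card_embedding_eq, Fintype.card_coe, Fintype.card_coe]

private lemma window_count (n : ℕ) (Pink : Finset (Fin n)) (a w k : ℕ) :
    ((Finset.univ.filter fun σ : Equiv.Perm (Fin n) =>
        k ≤ ((Finset.univ.filter fun i : Fin n =>
          a ≤ (i : ℕ) ∧ (i : ℕ) < a + w ∧ σ i ∈ Pink)).card)).card
      ≤ w.choose k * (Pink.card.descFactorial k * (n - k).factorial) := by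
  classical
  set W : Finset (Fin n) := Finset.univ.filter fun i : Fin n => a ≤ (i:ℕ) ∧ (i:ℕ) < a + w
    with hW
  set pp : Equiv.Perm (Fin n) → Finset (Fin n) := fun σ =>
    Finset.univ.filter fun i : Fin n => a ≤ (i:ℕ) ∧ (i:ℕ) < a + w ∧ σ i ∈ Pink with hpp
  have hppW : ∀ σ, pp σ ⊆ W := by
    intro σ i hi
    simp only [hpp, hW, Finset.mem_filter, Finset.mem_univ, true_and] at *
    tauto
  have hppPink : ∀ σ, ∀ i ∈ pp σ, σ i ∈ Pink := by
    intro σ i hi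
    simp only [hpp, Finset.mem_filter, Finset.mem_univ, true_and] at hi
    tauto
  set A := Finset.univ.filter fun σ : Equiv.Perm (Fin n) => k ≤ (pp σ).card with hA
  let F : Equiv.Perm (Fin n) → Finset (Fin n) := fun σ =>
    if h : k ≤ (pp σ).card then (Finset.exists_subset_card_eq h).choose else ∅
  have hF : ∀ σ, (h : k ≤ (pp σ).card) → F σ ⊆ pp σ ∧ (F σ).card = k := by
    intro σ h
    have := (Finset.exists_subset_card_eq h).choose_spec
    simpa [F, dif_pos h] using this
  have hmem : ∀ σ ∈ A, F σ ∈ W.powersetCard k := by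
    intro σ hσ
    rw [hA, Finset.mem_filter] at hσ
    obtain ⟨hsub, hcard⟩ := hF σ hσ.2
    exact Finset.mem_powersetCard.mpr ⟨hsub.trans (hppW σ), hcard⟩
  rw [Finset.card_eq_sum_card_fiberwise hmem]
  have fib : ∀ T ∈ W.powersetCard k,
      (A.filter fun σ => F σ = T).card ≤ Pink.card.descFactorial k * (n - k).factorial := by
    intro T hT
    obtain ⟨hTW, hTcard⟩ := Finset.mem_powersetCard.mp hT
    have hsub : (A.filter fun σ => F σ = T) ⊆
        Finset.univ.filter fun σ : Equiv.Perm (Fin n) => ∀ i ∈ T, σ i ∈ Pink := by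
      intro σ hσ
      rw [Finset.mem_filter] at hσ
      obtain ⟨hσA, hσF⟩ := hσ
      rw [hA, Finset.mem_filter] at hσA
      obtain ⟨hFsub, _⟩ := hF σ hσA.2
      rw [hσF] at hFsub
      exact Finset.mem_filter.mpr ⟨Finset.mem_univ _, fun i hi => hppPink σ i (hFsub hi)⟩
    calc (A.filter fun σ => F σ = T).card
        ≤ _ := Finset.card_le_card hsub
      _ ≤ Pink.card.descFactorial T.card * (n - T.card).factorial := fixed_set_count n Pink T
      _ = Pink.card.descFactorial k * (n - k).factorial := by rw [hTcard]
  calc ∑ T ∈ W.powersetCard k, (A.filter fun σ => F σ = T).card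
      ≤ ∑ _T ∈ W.powersetCard k, Pink.card.descFactorial k * (n - k).factorial :=
        Finset.sum_le_sum fib
    _ = (W.powersetCard k).card * (Pink.card.descFactorial k * (n - k).factorial) := by
        rw [Finset.sum_const, smul_eq_mul]
    _ ≤ w.choose k * (Pink.card.descFactorial k * (n - k).factorial) := by
        apply Nat.mul_le_mul_right
        rw [Finset.card_powersetCard]
        apply Nat.choose_le_choose
        -- W.card ≤ w
        have himg : W.card = (W.image (fun i : Fin n => (i : ℕ))).card :=
          (Finset.card_image_of_injective _ Fin.val_injective).symm
        rw [himg]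
        have : (W.image (fun i : Fin n => (i : ℕ))) ⊆ Finset.Ico a (a + w) := by
          intro x hx
          rw [Finset.mem_image] at hx
          obtain ⟨i, hi, rfl⟩ := hx
          rw [hW, Finset.mem_filter] at hi
          exact Finset.mem_Ico.mpr ⟨hi.2.1, hi.2.2⟩
        calc (W.image (fun i : Fin n => (i : ℕ))).card ≤ (Finset.Ico a (a + w)).card :=
              Finset.card_le_card this
          _ = w := by rw [Nat.card_Ico]; omega

private lemma count_le (n P w k : ℕ) (μ : ℝ) (hμ : 0 < μ) (hP : 0 < P) (hPn : P ≤ n)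
    (hk : 4 * μ < (k : ℝ)) (hw : (w : ℝ) * P ≤ n * μ) :
    ((w.choose k * (P.descFactorial k * (n - k).factorial) : ℕ) : ℝ) * (4 : ℝ) ^ μ
      ≤ (n.factorial : ℝ) := by
  have h4pos : (0:ℝ) < (4:ℝ) ^ μ := Real.rpow_pos_of_pos (by norm_num) μ
  rcases lt_or_ge P k with hPk | hkP
  · rw [Nat.descFactorial_eq_zero_iff_lt.mpr hPk]
    simp
  rcases lt_or_ge w k with hwk | hkw
  · rw [Nat.choose_eq_zero_of_lt hwk]
    simp
  have hkn : k ≤ n := hkP.trans hPn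
  have hnpos : 0 < n := lt_of_lt_of_le hP hPn
  have hkpos : (0:ℝ) < (k:ℝ) := lt_of_le_of_lt (by positivity) hk
  have hk4 : 4 * μ ≤ (k:ℝ) := hk.le
  have epos := Real.exp_pos 1
  have e1 : Real.exp 1 < 2.7182818286 := Real.exp_one_lt_d9
  -- T4 : (e/4)^k * 4^μ ≤ 1
  have T4 : (Real.exp 1 / 4) ^ k * (4:ℝ) ^ μ ≤ 1 := by
    have h2 : (Real.exp 1 / 4) ^ ((k : ℕ) : ℝ) ≤ (Real.exp 1 / 4) ^ (4 * μ) :=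
      Real.rpow_le_rpow_of_exponent_ge (by positivity) (by nlinarith) hk4
    have h3 : (Real.exp 1 / 4) ^ (4 * μ) = ((Real.exp 1 / 4) ^ (4:ℕ)) ^ μ := by
      rw [show (4 * μ) = ((4:ℕ):ℝ) * μ by norm_num,
        Real.rpow_mul (by positivity), Real.rpow_natCast]
    have h5 : ((Real.exp 1 / 4) ^ (4:ℕ)) ^ μ * (4:ℝ) ^ μ
        = (((Real.exp 1 / 4) ^ (4:ℕ)) * 4) ^ μ := by
      rw [← Real.mul_rpow (by positivity) (by norm_num)]
    have e2 : Real.exp 1 ^ 2 < 7.3891 := by nlinarith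
    have e4 : Real.exp 1 ^ 4 < 60 := by nlinarith [pow_pos epos 2]
    have h6 : ((Real.exp 1 / 4) ^ (4:ℕ)) * 4 ≤ 1 := by nlinarith [e4]
    calc (Real.exp 1 / 4) ^ k * (4:ℝ) ^ μ
        = (Real.exp 1 / 4) ^ ((k : ℕ) : ℝ) * (4:ℝ) ^ μ := by rw [Real.rpow_natCast]
      _ ≤ (Real.exp 1 / 4) ^ (4 * μ) * (4:ℝ) ^ μ := by
          exact mul_le_mul_of_nonneg_right h2 h4pos.le
      _ = ((Real.exp 1 / 4) ^ (4:ℕ)) ^ μ * (4:ℝ) ^ μ := by rw [h3]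
      _ = (((Real.exp 1 / 4) ^ (4:ℕ)) * 4) ^ μ := h5
      _ ≤ 1 := Real.rpow_le_one (by positivity) h6 hμ.le
  -- T3 : k^k ≤ k! * e^k
  have T3 : (k:ℝ) ^ k ≤ (k.factorial : ℝ) * Real.exp 1 ^ k := by
    have := Real.pow_div_factorial_le_exp (x := (k:ℝ)) (by positivity) k
    rw [div_le_iff₀ (by positivity)] at this
    rw [Real.exp_one_pow]
    linarith [this]
  -- hM : μ^k * 4^μ ≤ k!
  have hM : μ ^ k * (4:ℝ) ^ μ ≤ (k.factorial : ℝ) := by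
    have h5 : ((k:ℝ) / 4) ^ k ≤ (k.factorial : ℝ) * (Real.exp 1 / 4) ^ k := by
      calc ((k:ℝ) / 4) ^ k = (k:ℝ) ^ k / 4 ^ k := div_pow _ _ _
        _ ≤ ((k.factorial : ℝ) * Real.exp 1 ^ k) / 4 ^ k := by
            gcongr
        _ = (k.factorial : ℝ) * (Real.exp 1 / 4) ^ k := by rw [div_pow, mul_div_assoc]
    calc μ ^ k * (4:ℝ) ^ μ
        ≤ ((k:ℝ) / 4) ^ k * (4:ℝ) ^ μ := by
          apply mul_le_mul_of_nonneg_right _ h4pos.le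
          exact pow_le_pow_left₀ hμ.le (by linarith) k
      _ ≤ ((k.factorial : ℝ) * (Real.exp 1 / 4) ^ k) * (4:ℝ) ^ μ :=
          mul_le_mul_of_nonneg_right h5 h4pos.le
      _ = (k.factorial : ℝ) * ((Real.exp 1 / 4) ^ k * (4:ℝ) ^ μ) := by ring
      _ ≤ (k.factorial : ℝ) * 1 := by
          apply mul_le_mul_of_nonneg_left T4 (by positivity)
      _ = (k.factorial : ℝ) := mul_one _
  -- T1, T2
  have T1 : (w.choose k : ℝ) * (k.factorial : ℝ) ≤ (w:ℝ) ^ k := by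
    rw [← Nat.cast_mul, mul_comm]
    exact_mod_cast (Nat.descFactorial_eq_factorial_mul_choose w k ▸
      Nat.descFactorial_le_pow w k)
  have T2 : (P.descFactorial k : ℝ) * (n:ℝ) ^ k ≤ (n.descFactorial k : ℝ) * (P:ℝ) ^ k := by
    exact_mod_cast desc_ratio P n hPn k
  -- main inequality with extra factor
  have main : (w.choose k : ℝ) * (P.descFactorial k : ℝ) * (4:ℝ) ^ μ
      * ((k.factorial : ℝ) * (n:ℝ) ^ k)
      ≤ (n.descFactorial k : ℝ) * ((k.factorial : ℝ) * (n:ℝ) ^ k) := by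
    calc (w.choose k : ℝ) * (P.descFactorial k : ℝ) * (4:ℝ) ^ μ
          * ((k.factorial : ℝ) * (n:ℝ) ^ k)
        = ((w.choose k : ℝ) * k.factorial) * ((P.descFactorial k : ℝ) * (n:ℝ) ^ k)
          * (4:ℝ) ^ μ := by ring
      _ ≤ ((w:ℝ) ^ k) * ((n.descFactorial k : ℝ) * (P:ℝ) ^ k) * (4:ℝ) ^ μ := by
          apply mul_le_mul_of_nonneg_right _ h4pos.le
          exact mul_le_mul T1 T2 (by positivity) (by positivity)
      _ = (n.descFactorial k : ℝ) * (((w:ℝ) * P) ^ k * (4:ℝ) ^ μ) := by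
          rw [mul_pow]; ring
      _ ≤ (n.descFactorial k : ℝ) * (((n:ℝ) * μ) ^ k * (4:ℝ) ^ μ) := by
          apply mul_le_mul_of_nonneg_left _ (by positivity)
          apply mul_le_mul_of_nonneg_right _ h4pos.le
          exact pow_le_pow_left₀ (by positivity) hw k
      _ = (n.descFactorial k : ℝ) * ((n:ℝ) ^ k * (μ ^ k * (4:ℝ) ^ μ)) := by
          rw [mul_pow]; ring
      _ ≤ (n.descFactorial k : ℝ) * ((n:ℝ) ^ k * (k.factorial : ℝ)) := by
          apply mul_le_mul_of_nonneg_left _ (by positivity)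
          exact mul_le_mul_of_nonneg_left hM (by positivity)
      _ = (n.descFactorial k : ℝ) * ((k.factorial : ℝ) * (n:ℝ) ^ k) := by ring
  have core : (w.choose k : ℝ) * (P.descFactorial k : ℝ) * (4:ℝ) ^ μ
      ≤ (n.descFactorial k : ℝ) :=
    le_of_mul_le_mul_right main (by positivity)
  have hfac : ((n - k).factorial : ℝ) * (n.descFactorial k : ℝ) = (n.factorial : ℝ) := by
    rw [← Nat.cast_mul, Nat.factorial_mul_descFactorial hkn]
  push_cast
  calc (w.choose k : ℝ) * ((P.descFactorial k : ℝ) * ((n - k).factorial : ℝ)) * (4:ℝ) ^ μ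
      = ((n - k).factorial : ℝ) * ((w.choose k : ℝ) * (P.descFactorial k : ℝ) * (4:ℝ) ^ μ) := by
        ring
    _ ≤ ((n - k).factorial : ℝ) * (n.descFactorial k : ℝ) := by
        exact mul_le_mul_of_nonneg_left core (by positivity)
    _ = (n.factorial : ℝ) := hfac

/-- There are `n` items, a fixed set `Pink` of `P` of them is pink and the
remaining `Y = n - P` are yellow. For `log n ≤ μ ≤ P`, the number of permutations
(assignments of items to positions) for which there is a set of `⌊nμ/P⌋` consecutive
positions occupied by more than `4μ` pink items is at most `n! · n / 4^μ`. -/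
theorem stmt_1 (n P Y : ℕ) (hP : 0 < P) (hPn : P < n) (hY : Y = n - P)
    (μ : ℝ) (hμl : Real.log n ≤ μ) (hμu : μ ≤ (P : ℝ))
    (Pink : Finset (Fin n)) (hPink : Pink.card = P) :
    (({σ : Equiv.Perm (Fin n) |
        ∃ a : ℕ, a + ⌊(n : ℝ) * μ / (P : ℝ)⌋₊ ≤ n ∧
          4 * μ < ((Finset.univ.filter fun i : Fin n =>
            a ≤ (i : ℕ) ∧ (i : ℕ) < a + ⌊(n : ℝ) * μ / (P : ℝ)⌋₊ ∧ σ i ∈ Pink).card : ℝ)}).ncard : ℝ)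
      ≤ (n.factorial : ℝ) * n / (4 : ℝ) ^ μ := by
  classical
  have hn2 : 2 ≤ n := by omega
  have hn1 : (1:ℝ) < n := by exact_mod_cast (by omega : 1 < n)
  have hnposR : (0:ℝ) < n := by linarith
  have hPposR : (0:ℝ) < P := by exact_mod_cast hP
  have hμpos : 0 < μ := lt_of_lt_of_le (Real.log_pos hn1) hμl
  set w : ℕ := ⌊(n : ℝ) * μ / (P : ℝ)⌋₊ with hwdef
  set k : ℕ := ⌊4 * μ⌋₊ + 1 with hkdef
  have hk : 4 * μ < (k : ℝ) := by
    have := Nat.lt_floor_add_one (4 * μ)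
    rw [hkdef]
    push_cast
    linarith
  have hw : (w : ℝ) * P ≤ n * μ := by
    have h1 : (w : ℝ) ≤ (n : ℝ) * μ / P := Nat.floor_le (by positivity)
    calc (w : ℝ) * P ≤ ((n : ℝ) * μ / P) * P := by
          exact mul_le_mul_of_nonneg_right h1 hPposR.le
      _ = (n : ℝ) * μ := by field_simp
  have hw1 : 1 ≤ w := by
    rw [hwdef]
    rw [Nat.one_le_floor_iff]
    by_cases hn3 : 3 ≤ n
    · have hexp : Real.exp 1 ≤ (n:ℝ) := by
        have : (3:ℝ) ≤ n := by exact_mod_cast hn3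
        nlinarith [Real.exp_one_lt_d9]
      have h1μ : (1:ℝ) ≤ μ :=
        le_trans ((Real.le_log_iff_exp_le hnposR).mpr (by simpa using hexp)) hμl
      have hPle : (P:ℝ) ≤ n := by exact_mod_cast hPn.le
      rw [le_div_iff₀ hPposR]
      nlinarith
    · have hn2' : n = 2 := by omega
      have hP1 : P = 1 := by omega
      have hlog2 : Real.log 2 ≤ μ := by
        rw [hn2'] at hμl
        simpa using hμl
      have := Real.log_two_gt_d9
      rw [hn2', hP1]
      push_cast
      rw [le_div_iff₀ (by norm_num)]
      nlinarith
  -- convert the set to a finset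
  have hset : {σ : Equiv.Perm (Fin n) |
        ∃ a : ℕ, a + w ≤ n ∧
          4 * μ < ((Finset.univ.filter fun i : Fin n =>
            a ≤ (i : ℕ) ∧ (i : ℕ) < a + w ∧ σ i ∈ Pink).card : ℝ)}
      = ↑(Finset.univ.filter fun σ : Equiv.Perm (Fin n) =>
          ∃ a : ℕ, a + w ≤ n ∧
          4 * μ < ((Finset.univ.filter fun i : Fin n =>
            a ≤ (i : ℕ) ∧ (i : ℕ) < a + w ∧ σ i ∈ Pink).card : ℝ)) := by
    ext σ
    simp
  rw [hset, Set.ncard_coe_finset]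
  -- union bound
  have hsub : (Finset.univ.filter fun σ : Equiv.Perm (Fin n) =>
          ∃ a : ℕ, a + w ≤ n ∧
          4 * μ < ((Finset.univ.filter fun i : Fin n =>
            a ≤ (i : ℕ) ∧ (i : ℕ) < a + w ∧ σ i ∈ Pink).card : ℝ))
      ⊆ (Finset.range n).biUnion (fun a => Finset.univ.filter fun σ : Equiv.Perm (Fin n) =>
          k ≤ ((Finset.univ.filter fun i : Fin n =>
            a ≤ (i : ℕ) ∧ (i : ℕ) < a + w ∧ σ i ∈ Pink).card)) := by
    intro σ hσ
    rw [Finset.mem_filter] at hσ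
    obtain ⟨-, a, haw, hcard⟩ := hσ
    rw [Finset.mem_biUnion]
    refine ⟨a, Finset.mem_range.mpr (by omega), ?_⟩
    rw [Finset.mem_filter]
    refine ⟨Finset.mem_univ _, ?_⟩
    rw [hkdef, Nat.succ_le_iff]
    exact (Nat.floor_lt (by positivity)).mpr hcard
  have hcard1 : (Finset.univ.filter fun σ : Equiv.Perm (Fin n) =>
          ∃ a : ℕ, a + w ≤ n ∧
          4 * μ < ((Finset.univ.filter fun i : Fin n =>
            a ≤ (i : ℕ) ∧ (i : ℕ) < a + w ∧ σ i ∈ Pink).card : ℝ)).card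
      ≤ n * (w.choose k * (P.descFactorial k * (n - k).factorial)) := by
    calc _ ≤ ((Finset.range n).biUnion (fun a =>
            Finset.univ.filter fun σ : Equiv.Perm (Fin n) =>
            k ≤ ((Finset.univ.filter fun i : Fin n =>
              a ≤ (i : ℕ) ∧ (i : ℕ) < a + w ∧ σ i ∈ Pink).card))).card :=
          Finset.card_le_card hsub
      _ ≤ ∑ a ∈ Finset.range n, (Finset.univ.filter fun σ : Equiv.Perm (Fin n) =>
            k ≤ ((Finset.univ.filter fun i : Fin n =>
              a ≤ (i : ℕ) ∧ (i : ℕ) < a + w ∧ σ i ∈ Pink).card)).card :=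
          Finset.card_biUnion_le
      _ ≤ ∑ _a ∈ Finset.range n, w.choose k * (P.descFactorial k * (n - k).factorial) := by
          apply Finset.sum_le_sum
          intro a _
          have := window_count n Pink a w k
          rwa [hPink] at this
      _ = n * (w.choose k * (P.descFactorial k * (n - k).factorial)) := by
          rw [Finset.sum_const, smul_eq_mul, Finset.card_range]
  have h4pos : (0:ℝ) < (4:ℝ) ^ μ := Real.rpow_pos_of_pos (by norm_num) μ
  rw [le_div_iff₀ h4pos]
  have hB := count_le n P w k μ hμpos hP hPn.le hk hw
  calc (_ : ℝ) * (4:ℝ) ^ μ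
      ≤ ((n * (w.choose k * (P.descFactorial k * (n - k).factorial)) : ℕ) : ℝ) * (4:ℝ) ^ μ := by
        apply mul_le_mul_of_nonneg_right _ h4pos.le
        exact_mod_cast hcard1
    _ = (n:ℝ) * (((w.choose k * (P.descFactorial k * (n - k).factorial) : ℕ) : ℝ) * (4:ℝ) ^ μ) := by
        push_cast
        ring
    _ ≤ (n:ℝ) * (n.factorial : ℝ) := mul_le_mul_of_nonneg_left hB hnposR.le
    _ = (n.factorial : ℝ) * n := by ring
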